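/- Let 0 < α < 1, β ≥ 1, and let N, q, n be integers with q ≥ 0 and qN + 1 ≤ n. Then there exists a constant C (independent of n, N, q, ρ) such that ∑_{j=qN+1}^{n} (j - qN)^{-β} (n - j + 1)^{α-1} ≤ C K_{β,n} (n - qN)^{α-1}, where K_{β,n} = 1 + (1 - n^{1-β})/(β-1) if β ≠ 1 and K_{1,n} = 1 + ln n. -/

import Mathlib

open Finset

private lemma alpha_sum {α : ℝ} (hα0 : 0 < α) (hα1 : α < 1) (m : ℕ) :
    ∑ k ∈ Finset.Icc 1 m, (k : ℝ) ^ (α - 1) ≤ (m : ℝ) ^ α / α := by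
  induction m with
  | zero => simp [Real.zero_rpow hα0.ne']
  | succ m ih =>
    rw [Finset.sum_Icc_succ_top (by omega)]
    have hx : (1 : ℝ) ≤ ((m + 1 : ℕ) : ℝ) := by exact_mod_cast Nat.succ_le_succ (Nat.zero_le m)
    set x : ℝ := ((m + 1 : ℕ) : ℝ) with hxdef
    have hx0 : (0 : ℝ) < x := lt_of_lt_of_le one_pos hx
    have hs : (-1 : ℝ) ≤ -(1 / x) := by
      rw [neg_le_neg_iff]
      exact div_le_one_of_le₀ hx hx0.le
    have hb : (1 - 1 / x) ^ α ≤ 1 - α * (1 / x) := by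
      have h := rpow_one_add_le_one_add_mul_self hs hα0.le hα1.le
      rw [← sub_eq_add_neg] at h
      calc (1 - 1 / x) ^ α ≤ 1 + α * (-(1 / x)) := h
        _ = 1 - α * (1 / x) := by ring
    have hxm : (m : ℝ) = x - 1 := by push_cast [hxdef]; ring
    have key : (m : ℝ) ^ α ≤ x ^ α - α * x ^ (α - 1) := by
      have h1 : (m : ℝ) ^ α = x ^ α * (1 - 1 / x) ^ α := by
        rw [← Real.mul_rpow hx0.le (by
          have : 1 / x ≤ 1 := div_le_one_of_le₀ hx hx0.le
          linarith)]
        congr 1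
        field_simp [hxm]
        exact hxm
      have h2 : x ^ α * (1 - 1 / x) ^ α ≤ x ^ α * (1 - α * (1 / x)) :=
        mul_le_mul_of_nonneg_left hb (Real.rpow_nonneg hx0.le α)
      have h3 : x ^ α * (1 - α * (1 / x)) = x ^ α - α * x ^ (α - 1) := by
        rw [Real.rpow_sub_one hx0.ne']
        field_simp
      linarith
    have h4 : x ^ (α - 1) ≤ x ^ α / α - (m : ℝ) ^ α / α := by
      rw [div_sub_div_same] at *
      rw [← div_sub_div_same, ← sub_div] at *
      rw [le_div_iff₀ hα0]
      linarith
    linarith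

private lemma rev_sum (m : ℕ) (f : ℕ → ℝ) :
    ∑ i ∈ Finset.Icc 1 m, f (m - i + 1) = ∑ k ∈ Finset.Icc 1 m, f k := by
  refine Finset.sum_nbij' (fun i => m - i + 1) (fun k => m - k + 1) ?_ ?_ ?_ ?_ ?_ <;>
    intro a ha <;> simp only [Finset.mem_Icc] at * <;> omega

/-- Discrete convolution bound, case `β ≥ 1`. -/
theorem stmt_6 (α β : ℝ) (hα0 : 0 < α) (hα1 : α < 1) (hβ : 1 ≤ β)
    (K : ℝ → ℕ → ℝ)
    (hK : ∀ (b : ℝ) (m : ℕ), K b m =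
      if b = 1 then 1 + Real.log m else 1 + (1 - (m : ℝ) ^ (1 - b)) / (b - 1)) :
    ∃ C : ℝ, 0 < C ∧ ∀ N q n : ℕ, 1 ≤ N → q * N + 1 ≤ n →
      ∑ j ∈ Finset.Icc (q * N + 1) n,
          ((j - q * N : ℕ) : ℝ) ^ (-β) * ((n - j + 1 : ℕ) : ℝ) ^ (α - 1)
        ≤ C * K β n * ((n - q * N : ℕ) : ℝ) ^ (α - 1) := by
  -- the β-sum machinery
  obtain ⟨Cb, hCb, hK1, hSb⟩ :
      ∃ Cb : ℝ, 0 < Cb ∧ (∀ n : ℕ, 1 ≤ n → 1 ≤ K β n) ∧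
        ∀ m n : ℕ, 1 ≤ m → m ≤ n →
          ∑ i ∈ Finset.Icc 1 m, (i : ℝ) ^ (-β) ≤ Cb * K β n := by
    rcases eq_or_lt_of_le hβ with hb | hb
    · -- β = 1
      subst hb
      refine ⟨1, one_pos, ?_, ?_⟩
      · intro n hn
        rw [hK, if_pos rfl]
        have : (0:ℝ) ≤ Real.log n := Real.log_nonneg (by exact_mod_cast hn)
        linarith
      · intro m n hm hmn
        rw [hK, if_pos rfl, one_mul]
        have heq : ∑ i ∈ Finset.Icc 1 m, (i : ℝ) ^ (-(1:ℝ)) = (harmonic m : ℝ) := by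
          rw [harmonic]
          push_cast
          refine Finset.sum_nbij' (fun i => i - 1) (fun x => x + 1) ?_ ?_ ?_ ?_ ?_ <;>
            intro a ha <;>
            simp only [Finset.mem_Icc, Finset.mem_range] at ha ⊢
          · omega
          · omega
          · omega
          · omega
          · obtain ⟨h1, h2⟩ := ha
            rw [Real.rpow_neg_one, Nat.cast_sub h1]
            norm_num
        rw [heq]
        have h1 : (harmonic m : ℝ) ≤ 1 + Real.log m := harmonic_le_one_add_log m
        have h2 : Real.log m ≤ Real.log n :=
          Real.log_le_log (by exact_mod_cast hm) (by exact_mod_cast hmn)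
        linarith
    · -- β > 1
      have hsum : Summable (fun i : ℕ => (i : ℝ) ^ (-β)) :=
        Real.summable_nat_rpow.2 (by linarith)
      have hnonneg : ∀ i : ℕ, (0:ℝ) ≤ (i : ℝ) ^ (-β) := fun i =>
        Real.rpow_nonneg (Nat.cast_nonneg i) _
      refine ⟨max 1 (∑' i : ℕ, (i : ℝ) ^ (-β)), lt_of_lt_of_le one_pos (le_max_left _ _),
        ?_, ?_⟩
      · intro n hn
        rw [hK, if_neg (by linarith)]
        have : (n:ℝ) ^ (1 - β) ≤ 1 :=
          Real.rpow_le_one_of_one_le_of_nonpos (by exact_mod_cast hn) (by linarith)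
        have : 0 ≤ (1 - (n:ℝ) ^ (1 - β)) / (β - 1) :=
          div_nonneg (by linarith) (by linarith)
        linarith
      · intro m n hm hmn
        have h1 : ∑ i ∈ Finset.Icc 1 m, (i : ℝ) ^ (-β) ≤ ∑' i : ℕ, (i : ℝ) ^ (-β) :=
          Summable.sum_le_tsum _ (fun i _ => hnonneg i) hsum
        have h2 : (1:ℝ) ≤ K β n := by
          rw [hK, if_neg (by linarith)]
          have : (n:ℝ) ^ (1 - β) ≤ 1 :=
            Real.rpow_le_one_of_one_le_of_nonpos
              (by exact_mod_cast le_trans hm hmn) (by linarith)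
          have : 0 ≤ (1 - (n:ℝ) ^ (1 - β)) / (β - 1) :=
            div_nonneg (by linarith) (by linarith)
          linarith
        calc ∑ i ∈ Finset.Icc 1 m, (i : ℝ) ^ (-β)
            ≤ max 1 (∑' i : ℕ, (i : ℝ) ^ (-β)) := le_trans h1 (le_max_right _ _)
          _ = max 1 (∑' i : ℕ, (i : ℝ) ^ (-β)) * 1 := (mul_one _).symm
          _ ≤ max 1 (∑' i : ℕ, (i : ℝ) ^ (-β)) * K β n := by
              exact mul_le_mul_of_nonneg_left h2
                (le_trans zero_le_one (le_max_left _ _))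
  refine ⟨2 * Cb + 2 ^ β / α, by positivity, ?_⟩
  intro N q n hN hn
  set M := q * N with hM
  set m := n - M with hm
  have hm1 : 1 ≤ m := by omega
  have hnMm : n = M + m := by omega
  have hK1n : 1 ≤ K β n := hK1 n (by omega)
  have hmR : (1:ℝ) ≤ (m:ℝ) := by exact_mod_cast hm1
  have hmpos : (0:ℝ) < (m:ℝ) := lt_of_lt_of_le one_pos hmR
  have hm2pos : (0:ℝ) < (m:ℝ) / 2 := by linarith
  -- reindex
  have hre : ∑ j ∈ Finset.Icc (M + 1) n,
      ((j - M : ℕ) : ℝ) ^ (-β) * ((n - j + 1 : ℕ) : ℝ) ^ (α - 1)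
      = ∑ i ∈ Finset.Icc 1 m, (i : ℝ) ^ (-β) * ((m - i + 1 : ℕ) : ℝ) ^ (α - 1) := by
    have hmap : Finset.Icc (M + 1) n = (Finset.Icc 1 m).map (addLeftEmbedding M) := by
      rw [Finset.map_add_left_Icc, hnMm]
    rw [hmap, Finset.sum_map]
    refine Finset.sum_congr rfl fun i hi => ?_
    simp only [addLeftEmbedding_apply]
    have e1 : M + i - M = i := by omega
    have e2 : n - (M + i) = m - i := by omega
    rw [e1, e2]
  rw [hre]
  -- split the sum
  set g : ℕ → ℝ := fun i => (i : ℝ) ^ (-β) * ((m - i + 1 : ℕ) : ℝ) ^ (α - 1) with hg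
  rw [← Finset.sum_filter_add_sum_filter_not (Finset.Icc 1 m) (fun i => 2 * i ≤ m + 1) g]
  have hgnonneg : ∀ i, 0 ≤ g i := fun i =>
    mul_nonneg (Real.rpow_nonneg (Nat.cast_nonneg _) _)
      (Real.rpow_nonneg (Nat.cast_nonneg _) _)
  -- part 1
  have h1 : ∑ i ∈ (Finset.Icc 1 m).filter (fun i => 2 * i ≤ m + 1), g i
      ≤ Cb * K β n * (2 * (m:ℝ) ^ (α - 1)) := by
    have hterm : ∀ i ∈ (Finset.Icc 1 m).filter (fun i => 2 * i ≤ m + 1),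
        g i ≤ (i : ℝ) ^ (-β) * (2 * (m:ℝ) ^ (α - 1)) := by
      intro i hi
      simp only [Finset.mem_filter, Finset.mem_Icc] at hi
      have hc : m ≤ 2 * (m - i + 1) := by omega
      have hcr : (m:ℝ) / 2 ≤ ((m - i + 1 : ℕ) : ℝ) := by
        have : (m:ℝ) ≤ 2 * ((m - i + 1 : ℕ) : ℝ) := by exact_mod_cast hc
        linarith
      have hstep : ((m - i + 1 : ℕ) : ℝ) ^ (α - 1) ≤ 2 * (m:ℝ) ^ (α - 1) := by
        have h5 : ((m - i + 1 : ℕ) : ℝ) ^ (α - 1) ≤ ((m:ℝ) / 2) ^ (α - 1) :=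
          Real.rpow_le_rpow_of_nonpos hm2pos hcr (by linarith)
        have h6 : ((m:ℝ) / 2) ^ (α - 1) = (m:ℝ) ^ (α - 1) * ((2:ℝ) ^ (α-1))⁻¹ := by
          rw [Real.div_rpow hmpos.le (by norm_num), div_eq_mul_inv]
        have h7 : ((2:ℝ) ^ (α-1))⁻¹ = (2:ℝ) ^ (1 - α) := by
          rw [← Real.rpow_neg (by norm_num)]
          norm_num
        have h8 : (2:ℝ) ^ (1 - α) ≤ 2 := by
          calc (2:ℝ) ^ (1 - α) ≤ (2:ℝ) ^ (1:ℝ) :=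
            Real.rpow_le_rpow_of_exponent_le (by norm_num) (by linarith)
          _ = 2 := Real.rpow_one 2
        calc ((m - i + 1 : ℕ) : ℝ) ^ (α - 1) ≤ (m:ℝ) ^ (α - 1) * (2:ℝ) ^ (1 - α) := by
              rw [← h7, ← h6]; exact h5
          _ ≤ (m:ℝ) ^ (α - 1) * 2 :=
              mul_le_mul_of_nonneg_left h8 (Real.rpow_nonneg hmpos.le _)
          _ = 2 * (m:ℝ) ^ (α - 1) := mul_comm _ _
      exact mul_le_mul_of_nonneg_left hstep (Real.rpow_nonneg (Nat.cast_nonneg _) _)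
    calc ∑ i ∈ (Finset.Icc 1 m).filter (fun i => 2 * i ≤ m + 1), g i
        ≤ ∑ i ∈ (Finset.Icc 1 m).filter (fun i => 2 * i ≤ m + 1),
            (i : ℝ) ^ (-β) * (2 * (m:ℝ) ^ (α - 1)) := Finset.sum_le_sum hterm
      _ = (∑ i ∈ (Finset.Icc 1 m).filter (fun i => 2 * i ≤ m + 1), (i : ℝ) ^ (-β))
            * (2 * (m:ℝ) ^ (α - 1)) := by rw [← Finset.sum_mul]
      _ ≤ (∑ i ∈ Finset.Icc 1 m, (i : ℝ) ^ (-β)) * (2 * (m:ℝ) ^ (α - 1)) := by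
          refine mul_le_mul_of_nonneg_right ?_ (by positivity)
          exact Finset.sum_le_sum_of_subset_of_nonneg (Finset.filter_subset _ _)
            (fun i _ _ => Real.rpow_nonneg (Nat.cast_nonneg _) _)
      _ ≤ Cb * K β n * (2 * (m:ℝ) ^ (α - 1)) := by
          refine mul_le_mul_of_nonneg_right ?_ (by positivity)
          exact hSb m n hm1 (by omega)
  -- part 2
  have h2 : ∑ i ∈ (Finset.Icc 1 m).filter (fun i => ¬ 2 * i ≤ m + 1), g i
      ≤ 2 ^ β / α * (m:ℝ) ^ (α - 1) := by
    have hterm : ∀ i ∈ (Finset.Icc 1 m).filter (fun i => ¬ 2 * i ≤ m + 1),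
        g i ≤ 2 ^ β / (m:ℝ) * ((m - i + 1 : ℕ) : ℝ) ^ (α - 1) := by
      intro i hi
      simp only [Finset.mem_filter, Finset.mem_Icc, not_le] at hi
      have hir : (m:ℝ) / 2 ≤ (i:ℝ) := by
        have : (m:ℝ) ≤ 2 * (i:ℝ) := by exact_mod_cast (by omega : m ≤ 2 * i)
        linarith
      have hib : (i : ℝ) ^ (-β) ≤ 2 ^ β / (m:ℝ) := by
        have h5 : (i : ℝ) ^ (-β) ≤ ((m:ℝ) / 2) ^ (-β) :=
          Real.rpow_le_rpow_of_nonpos hm2pos hir (by linarith)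
        have h6 : ((m:ℝ) / 2) ^ (-β) = (m:ℝ) ^ (-β) * (2:ℝ) ^ β := by
          rw [Real.div_rpow hmpos.le (by norm_num), div_eq_mul_inv,
            ← Real.rpow_neg (by norm_num), neg_neg]
        have h7 : (m:ℝ) ^ (-β) ≤ (m:ℝ) ^ (-(1:ℝ)) :=
          Real.rpow_le_rpow_of_exponent_le hmR (by linarith)
        have h8 : (m:ℝ) ^ (-(1:ℝ)) = 1 / (m:ℝ) := by
          rw [Real.rpow_neg_one, one_div]
        calc (i : ℝ) ^ (-β) ≤ (m:ℝ) ^ (-β) * (2:ℝ) ^ β := h6 ▸ h5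
          _ ≤ 1 / (m:ℝ) * (2:ℝ) ^ β := by
              refine mul_le_mul_of_nonneg_right ?_ (Real.rpow_nonneg (by norm_num) _)
              rw [← h8]; exact h7
          _ = 2 ^ β / (m:ℝ) := by ring
      exact mul_le_mul_of_nonneg_right hib (Real.rpow_nonneg (Nat.cast_nonneg _) _)
    calc ∑ i ∈ (Finset.Icc 1 m).filter (fun i => ¬ 2 * i ≤ m + 1), g i
        ≤ ∑ i ∈ (Finset.Icc 1 m).filter (fun i => ¬ 2 * i ≤ m + 1),
            2 ^ β / (m:ℝ) * ((m - i + 1 : ℕ) : ℝ) ^ (α - 1) := Finset.sum_le_sum hterm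
      _ ≤ ∑ i ∈ Finset.Icc 1 m, 2 ^ β / (m:ℝ) * ((m - i + 1 : ℕ) : ℝ) ^ (α - 1) :=
          Finset.sum_le_sum_of_subset_of_nonneg (Finset.filter_subset _ _)
            (fun i _ _ => mul_nonneg (by positivity) (Real.rpow_nonneg (Nat.cast_nonneg _) _))
      _ = 2 ^ β / (m:ℝ) * ∑ i ∈ Finset.Icc 1 m, ((m - i + 1 : ℕ) : ℝ) ^ (α - 1) := by
          rw [Finset.mul_sum]
      _ = 2 ^ β / (m:ℝ) * ∑ k ∈ Finset.Icc 1 m, (k : ℝ) ^ (α - 1) := by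
          rw [rev_sum m (fun k => (k : ℝ) ^ (α - 1))]
      _ ≤ 2 ^ β / (m:ℝ) * ((m:ℝ) ^ α / α) := by
          exact mul_le_mul_of_nonneg_left (alpha_sum hα0 hα1 m) (by positivity)
      _ = 2 ^ β / α * ((m:ℝ) ^ α / (m:ℝ)) := by ring
      _ = 2 ^ β / α * (m:ℝ) ^ (α - 1) := by rw [← Real.rpow_sub_one hmpos.ne']
  -- combine
  have hKnonneg : 0 ≤ K β n := by linarith
  have hR : 0 ≤ (m:ℝ) ^ (α - 1) := Real.rpow_nonneg hmpos.le _
  have h3 : 2 ^ β / α * (m:ℝ) ^ (α - 1) ≤ 2 ^ β / α * K β n * (m:ℝ) ^ (α - 1) := by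
    have : (2:ℝ) ^ β / α * 1 ≤ 2 ^ β / α * K β n :=
      mul_le_mul_of_nonneg_left hK1n (by positivity)
    nlinarith
  have hfin : ((n - q * N : ℕ) : ℝ) = ((m : ℕ) : ℝ) := rfl
  rw [hfin]
  nlinarith [h1, h2, h3, mul_nonneg (mul_nonneg hCb.le hKnonneg) hR]
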